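/- For d ≥ 2, the separated planar-style construction gives M_k(d, n) ≥ T(n, N_k(d)), where T(n, s) is the number of edges of the balanced complete s-partite graph on n vertices: given a (d−1, α)-flat ε-nearly k-distance set S' of cardinality N := N_k(d) in ℝ^d with all distances > 2n², replacing each point v ∈ S' by an arithmetic progression of n/N points along the unit normal direction of its flatness hyperplane yields a separated n-point set in which the number of pairs at distance within 1/2 of one of the k distances of S' is exactly T(n, N). -/

import Mathlib

open scoped BigOperators RealInnerProductSpace
open Filter

noncomputable section

abbrev Pt (d : ℕ) := EuclideanSpace ℝ (Fin d)

def Separated {d : ℕ} (S : Finset (Pt d)) : Prop :=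
  ∀ p ∈ S, ∀ q ∈ S, p ≠ q → 1 ≤ dist p q

def IsKDistSet {d : ℕ} (k : ℕ) (S : Finset (Pt d)) : Prop :=
  ∃ D : Finset ℝ, D.card ≤ k ∧ ∀ p ∈ S, ∀ q ∈ S, p ≠ q → dist p q ∈ D

def mDist (k d : ℕ) : ℕ :=
  sSup {n : ℕ | ∃ S : Finset (Pt d), S.card = n ∧ IsKDistSet k S}

def IsNearlyKDist {d : ℕ} (k : ℕ) (ε : ℝ) (S : Finset (Pt d)) : Prop :=
  Separated S ∧ ∃ t : ℕ → ℝ, (∀ i < k, 1 ≤ t i) ∧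
    ∀ p ∈ S, ∀ q ∈ S, p ≠ q → ∃ i < k, dist p q ∈ Set.Icc (t i) (t i + ε)

def Mnear (k d : ℕ) : ℕ :=
  sSup {M : ℕ | ∀ ε : ℝ, 0 < ε → ∃ S : Finset (Pt d), S.card = M ∧ IsNearlyKDist k ε S}

def vsAngle {d : ℕ} (v : Pt d) (Λ : Submodule ℝ (Pt d)) : ℝ :=
  sInf {θ : ℝ | ∃ w ∈ Λ, w ≠ 0 ∧ θ = InnerProductGeometry.angle v w}

def IsFlatAt {d : ℕ} (S : Finset (Pt d)) (p : Pt d) (j : ℕ) (α : ℝ) : Prop :=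
  ∃ Λ : Submodule ℝ (Pt d), Module.finrank ℝ Λ = j ∧
    ∀ q ∈ S, q ≠ p → vsAngle (p - q) Λ ≤ α

def Nflat (k d' d : ℕ) : ℕ :=
  sSup {N : ℕ | ∀ ε α : ℝ, 0 < ε → 0 < α →
    ∃ S : Finset (Pt d'), S.card = N ∧ IsNearlyKDist k ε S ∧ ∀ p ∈ S, IsFlatAt S p d α}

def turanNum (n s : ℕ) : ℕ :=
  n.choose 2 - ((n % s) * (n / s + 1).choose 2 + (s - n % s) * (n / s).choose 2)

open Classical in
def nearPairs {d : ℕ} (S : Finset (Pt d)) (k : ℕ) (ε : ℝ) (t : ℕ → ℝ) :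
    Finset (Pt d × Pt d) :=
  S.offDiag.filter (fun pq => ∃ i < k, dist pq.1 pq.2 ∈ Set.Icc (t i) (t i + ε))

def Mkdn (k d n : ℕ) : ℕ :=
  sSup {M : ℕ | ∃ (S : Finset (Pt d)) (t : ℕ → ℝ), S.card = n ∧ Separated S ∧
    (∀ i < k, 1 ≤ t i) ∧ (nearPairs S k 1 t).card = 2 * M}


section Helpers

lemma L1 {d : ℕ} (Λ : Submodule ℝ (Pt d)) (hΛ : Λ ≠ ⊥) (u x : Pt d)
    (hu : u ∈ Λᗮ) (hu1 : ‖u‖ = 1) {α : ℝ} (hα : 0 < α) (hαπ : 2 * α ≤ Real.pi / 2)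
    (hang : vsAngle x Λ ≤ α) : |⟪x, u⟫| ≤ 2 * α * ‖x‖ := by
  rcases eq_or_ne x 0 with rfl | hx0
  · simp [inner_zero_left]
  set s : Set ℝ := {θ : ℝ | ∃ w ∈ Λ, w ≠ 0 ∧ θ = InnerProductGeometry.angle x w} with hs
  obtain ⟨w₀, hw₀Λ, hw₀⟩ := Submodule.exists_mem_ne_zero_of_ne_bot hΛ
  have hne : s.Nonempty := ⟨_, w₀, hw₀Λ, hw₀, rfl⟩
  have hlt : sInf s < 2 * α := lt_of_le_of_lt hang (by linarith)
  obtain ⟨θ, ⟨w, hwΛ, hw0, rfl⟩, hθ⟩ := exists_lt_of_csInf_lt hne hlt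
  have hcos2α : Real.cos (2*α) ≤ Real.cos (InnerProductGeometry.angle x w) :=
    Real.cos_le_cos_of_nonneg_of_le_pi (InnerProductGeometry.angle_nonneg x w)
      (by linarith [Real.pi_pos]) hθ.le
  have hcosnn : (0:ℝ) ≤ Real.cos (2*α) :=
    Real.cos_nonneg_of_mem_Icc ⟨by linarith, hαπ⟩
  set P := (Submodule.orthogonalProjectionOnto Λ x : Pt d) with hP
  have hPmem : P ∈ Λ := (Submodule.orthogonalProjectionOnto Λ x).2
  have hxP : x - P ∈ Λᗮ := Submodule.sub_starProjection_mem_orthogonal (K := Λ) x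
  have hinner : ⟪x, w⟫ = ⟪P, w⟫ := by
    have h0 : ⟪x - P, w⟫ = 0 := by
      rw [real_inner_comm]; exact hxP w hwΛ
    have := inner_sub_left (𝕜 := ℝ) x P w
    rw [h0] at this
    linarith
  have hCS : ⟪P, w⟫ ≤ ‖P‖ * ‖w‖ := le_trans (le_abs_self _) (abs_real_inner_le_norm P w)
  have hxpos : (0:ℝ) < ‖x‖ := norm_pos_iff.mpr hx0
  have hwpos : (0:ℝ) < ‖w‖ := norm_pos_iff.mpr hw0
  have hcoseq := InnerProductGeometry.cos_angle x w
  have hPnorm : Real.cos (2*α) * ‖x‖ ≤ ‖P‖ := by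
    have h1 : Real.cos (2*α) ≤ ⟪x, w⟫ / (‖x‖ * ‖w‖) := by rw [← hcoseq]; exact hcos2α
    rw [le_div_iff₀ (by positivity)] at h1
    nlinarith [h1]
  have hpyth : ‖x‖^2 = ‖P‖^2 + ‖x - P‖^2 := by
    have h0 : ⟪P, x - P⟫ = 0 := hxP P hPmem
    have := norm_add_sq_real P (x - P)
    rw [h0] at this
    have hxx : P + (x - P) = x := by abel
    rw [hxx] at this
    linarith
  have h2 : (Real.cos (2*α))^2 * ‖x‖^2 ≤ ‖P‖^2 := by
    have := mul_self_le_mul_self (mul_nonneg hcosnn hxpos.le) hPnorm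
    nlinarith [this]
  have hsinle : Real.sin (2*α) ≤ 2*α := Real.sin_le (by linarith)
  have hsinnn : 0 ≤ Real.sin (2*α) :=
    Real.sin_nonneg_of_nonneg_of_le_pi (by linarith) (by linarith [Real.pi_pos])
  have hsin : ‖x - P‖^2 ≤ (Real.sin (2*α))^2 * ‖x‖^2 := by
    have h1 : Real.sin (2*α) ^ 2 = 1 - Real.cos (2*α)^2 := by
      have := Real.sin_sq_add_cos_sq (2*α); linarith
    nlinarith [hpyth, h2]
  have h3 : ‖x - P‖^2 ≤ (2*α*‖x‖)^2 := by
    have := mul_self_le_mul_self hsinnn hsinle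
    nlinarith [sq_nonneg ‖x‖]
  have hxPle : ‖x - P‖ ≤ 2*α*‖x‖ := by
    have h4 := Real.sqrt_le_sqrt h3
    rwa [Real.sqrt_sq (norm_nonneg _), Real.sqrt_sq (by positivity)] at h4
  calc |⟪x, u⟫| = |⟪x - P, u⟫| := by
        have h0 : ⟪P, u⟫ = 0 := hu P hPmem
        have := inner_sub_left (𝕜 := ℝ) x P u
        rw [h0, sub_zero] at this
        rw [this]
    _ ≤ ‖x - P‖ * ‖u‖ := abs_real_inner_le_norm _ _
    _ = ‖x - P‖ := by rw [hu1, mul_one]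
    _ ≤ 2*α*‖x‖ := hxPle

lemma L2 {d : ℕ} (hd : 2 ≤ d) (S : Finset (Pt d)) (v : Pt d) {α : ℝ}
    (hα : 0 < α) (hαπ : 2 * α ≤ Real.pi / 2)
    (hflat : IsFlatAt S v (d - 1) α) :
    ∃ u : Pt d, ‖u‖ = 1 ∧ ∀ w ∈ S, w ≠ v → |⟪v - w, u⟫| ≤ 2 * α * ‖v - w‖ := by
  obtain ⟨Λ, hrank, hang⟩ := hflat
  have hΛbot : Λ ≠ ⊥ := by
    intro h
    rw [h, finrank_bot] at hrank
    omega
  have hΛtop : Λ ≠ ⊤ := by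
    intro h
    rw [h, finrank_top] at hrank
    rw [finrank_euclideanSpace_fin] at hrank
    omega
  have hperp : Λᗮ ≠ ⊥ := by
    intro h
    exact hΛtop (Submodule.orthogonal_eq_bot_iff.mp h)
  obtain ⟨x, hxΛ, hx0⟩ := Submodule.exists_mem_ne_zero_of_ne_bot hperp
  refine ⟨(‖x‖:ℝ)⁻¹ • x, ?_, ?_⟩
  · exact norm_smul_inv_norm (𝕜 := ℝ) hx0
  · intro w hw hwv
    exact L1 Λ hΛbot _ _ (Submodule.smul_mem _ _ hxΛ)
      (norm_smul_inv_norm (𝕜 := ℝ) hx0) hα hαπ (hang w hw hwv)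

-- distance estimate
lemma L3 {d : ℕ} (z x : Pt d) (n : ℕ) (hn : 1 ≤ n)
    (hD : 16 * (n:ℝ)^2 ≤ ‖z‖)
    (hzx : |⟪z, x⟫| ≤ ‖z‖ / 16)
    (hx : ‖x‖ ≤ 2 * n) :
    |‖z + x‖ - ‖z‖| ≤ 1/4 := by
  have hn1 : (1:ℝ) ≤ n := by exact_mod_cast hn
  have hD1 : (1:ℝ) ≤ ‖z‖ := by nlinarith
  have hsq := norm_add_sq_real z x
  have hxsq : ‖x‖^2 ≤ 4 * (n:ℝ)^2 := by nlinarith [norm_nonneg x]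
  have hub : ‖z + x‖^2 ≤ (‖z‖ + 1/4)^2 := by
    nlinarith [abs_le.mp hzx]
  have hlb : (‖z‖ - 1/4)^2 ≤ ‖z + x‖^2 := by
    nlinarith [abs_le.mp hzx, norm_nonneg x, sq_nonneg ‖x‖]
  rw [abs_le]
  constructor
  · have h4 := Real.sqrt_le_sqrt hlb
    rw [Real.sqrt_sq (by linarith), Real.sqrt_sq (norm_nonneg _)] at h4
    linarith
  · have h4 := Real.sqrt_le_sqrt hub
    rw [Real.sqrt_sq (norm_nonneg _), Real.sqrt_sq (by linarith)] at h4
    linarith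

lemma Habs (a b : ℕ) (h : a ≠ b) : (1:ℝ) ≤ |(a:ℝ) - (b:ℝ)| := by
  rcases lt_or_gt_of_ne h with h' | h'
  · have hh : (a:ℝ) + 1 ≤ b := by exact_mod_cast h'
    rw [abs_sub_comm, abs_of_nonneg (by linarith)]; linarith
  · have hh : (b:ℝ) + 1 ≤ a := by exact_mod_cast h'
    rw [abs_of_nonneg (by linarith)]; linarith

lemma Hchoose (x : ℕ) : 2 * x.choose 2 = x * (x - 1) := by
  rw [Nat.choose_two_right]
  have he : Even (x * (x - 1)) := by
    rcases x with _ | y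
    · simp
    · simpa [Nat.succ_sub_one, Nat.mul_comm] using Nat.even_mul_succ_self y
  obtain ⟨c, hc⟩ := he
  omega

lemma Hsq (x : ℕ) : x * x - x = 2 * x.choose 2 := by
  rw [Hchoose, Nat.mul_sub, Nat.mul_one]

end Helpers

set_option maxHeartbeats 2000000 in
theorem stmt18 (k d n : ℕ) (hk : 1 ≤ k) (hd : 2 ≤ d)
    (hdvd : Nflat k d (d - 1) ∣ n) :
    turanNum n (Nflat k d (d - 1)) ≤ Mkdn k d n := by
  classical
  rcases Nat.eq_zero_or_pos n with rfl | hn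
  · have h0 : turanNum 0 (Nflat k d (d - 1)) = 0 := by unfold turanNum; simp
    rw [h0]; exact Nat.zero_le _
  set A : Set ℕ := {N : ℕ | ∀ ε α : ℝ, 0 < ε → 0 < α →
    ∃ S : Finset (Pt d), S.card = N ∧ IsNearlyKDist k ε S ∧
      ∀ p ∈ S, IsFlatAt S p (d - 1) α} with hA
  have hNA : Nflat k d (d - 1) = sSup A := rfl
  by_cases hbdd : BddAbove A
  swap
  · exfalso
    have h0 : Nflat k d (d - 1) = 0 := by
      rw [hNA, csSup_of_not_bddAbove hbdd, csSup_empty]; rfl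
    rw [h0] at hdvd
    have := Nat.eq_zero_of_zero_dvd hdvd
    omega
  have h0A : (0:ℕ) ∈ A := by
    intro ε α hε hα
    refine ⟨∅, by simp, ⟨fun p hp => by simp at hp, fun _ => 1, fun i _ => le_rfl,
      fun p hp => by simp at hp⟩, fun p hp => by simp at hp⟩
  have hmem : Nflat k d (d - 1) ∈ A := by
    rw [hNA]; exact Nat.sSup_mem ⟨0, h0A⟩ hbdd
  set N := Nflat k d (d - 1) with hNdef
  have hNpos : 0 < N := Nat.pos_of_dvd_of_pos hdvd hn
  set m := n / N with hm
  have hnm : n = N * m := (Nat.mul_div_cancel' hdvd).symm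
  have hmpos : 0 < m := by
    rcases Nat.eq_zero_or_pos m with h | h
    · rw [h, Nat.mul_zero] at hnm; omega
    · exact h
  have hmn : m ≤ n := hm ▸ Nat.div_le_self n N
  have hn1 : (1:ℝ) ≤ n := by exact_mod_cast hn
  have hmnR : (m:ℝ) ≤ n := by exact_mod_cast hmn
  -- parameters
  set c : ℝ := 16 * (n:ℝ)^2 with hc
  have hcpos : 0 < c := by positivity
  have hc16 : (16:ℝ) ≤ c := by nlinarith
  set α : ℝ := 1 / (64 * (n:ℝ)) with hαdef
  have hαpos : 0 < α := by positivity
  have hαπ : 2 * α ≤ Real.pi / 2 := by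
    have h1 : 2 * α ≤ 1 / 32 := by
      rw [hαdef, mul_one_div]
      rw [div_le_div_iff₀ (by positivity) (by norm_num)]
      nlinarith
    nlinarith [Real.pi_gt_three]
  set ε₀ : ℝ := 1 / (4 * c) with hε₀def
  have hε₀pos : 0 < ε₀ := by positivity
  have hcε₀ : c * ε₀ = 1/4 := by rw [hε₀def]; field_simp
  obtain ⟨S₁, hS₁card, ⟨hsep, t, ht1, htd⟩, hflat⟩ := hmem ε₀ α hε₀pos hαpos
  -- unit normals
  have huex : ∀ v ∈ S₁, ∃ u : Pt d, ‖u‖ = 1 ∧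
      ∀ w ∈ S₁, w ≠ v → |⟪v - w, u⟫| ≤ 2 * α * ‖v - w‖ :=
    fun v hv => L2 hd S₁ v hαpos hαπ (hflat v hv)
  choose! u hu1 hu2 using huex
  set F : Pt d × ℕ → Pt d := fun x => c • x.1 + ((x.2:ℕ):ℝ) • u x.1 with hF
  -- K1 : distances within a progression
  have K1 : ∀ v ∈ S₁, ∀ a b : ℕ, dist (F (v,a)) (F (v,b)) = |(a:ℝ) - (b:ℝ)| := by
    intro v hv a b
    rw [dist_eq_norm]
    have hdiff : F (v,a) - F (v,b) = ((a:ℝ) - (b:ℝ)) • u v := by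
      simp only [hF]; module
    rw [hdiff, norm_smul, hu1 v hv, mul_one, Real.norm_eq_abs]
  -- K2 : cross distances
  have K2 : ∀ v ∈ S₁, ∀ w ∈ S₁, v ≠ w → ∀ a b : ℕ, a ≤ n → b ≤ n →
      |dist (F (v,a)) (F (w,b)) - c * dist v w| ≤ 1/4 := by
    intro v hv w hw hvw a b ha hb
    have haR : (a:ℝ) ≤ n := by exact_mod_cast ha
    have hbR : (b:ℝ) ≤ n := by exact_mod_cast hb
    set z : Pt d := c • (v - w) with hz
    set x : Pt d := (a:ℝ) • u v - (b:ℝ) • u w with hx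
    have hdiff : F (v,a) - F (w,b) = z + x := by
      simp only [hF, hz, hx]; module
    have hdisteq : dist (F (v,a)) (F (w,b)) = ‖z + x‖ := by
      rw [dist_eq_norm, hdiff]
    have hnz : ‖z‖ = c * dist v w := by
      rw [hz, norm_smul, Real.norm_eq_abs, abs_of_pos hcpos, dist_eq_norm]
    have hd1 : 1 ≤ dist v w := hsep v hv w hw hvw
    have hD : 16 * (n:ℝ)^2 ≤ ‖z‖ := by rw [hnz, hc]; nlinarith
    -- inner products with the normals
    have hzuv : |⟪z, u v⟫| ≤ 2 * α * ‖z‖ := by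
      have h1 : ⟪z, u v⟫ = c * ⟪v - w, u v⟫ := real_inner_smul_left _ _ _
      have h2 := hu2 v hv w hw hvw.symm
      rw [h1, abs_mul, abs_of_pos hcpos]
      calc c * |⟪v - w, u v⟫| ≤ c * (2 * α * ‖v - w‖) := by
            exact mul_le_mul_of_nonneg_left h2 hcpos.le
        _ = 2 * α * ‖z‖ := by rw [hz, norm_smul, Real.norm_eq_abs, abs_of_pos hcpos]; ring
    have hzuw : |⟪z, u w⟫| ≤ 2 * α * ‖z‖ := by
      have h1 : ⟪z, u w⟫ = c * ⟪v - w, u w⟫ := real_inner_smul_left _ _ _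
      have h3 : ⟪v - w, u w⟫ = -⟪w - v, u w⟫ := by
        rw [show v - w = -(w - v) by abel, inner_neg_left]
      have h2 := hu2 w hw v hv hvw
      rw [h1, abs_mul, abs_of_pos hcpos, h3, abs_neg]
      have h4 : ‖w - v‖ = ‖v - w‖ := norm_sub_rev _ _
      rw [h4] at h2
      calc c * |⟪w - v, u w⟫| ≤ c * (2 * α * ‖v - w‖) := by
            exact mul_le_mul_of_nonneg_left h2 hcpos.le
        _ = 2 * α * ‖z‖ := by rw [hz, norm_smul, Real.norm_eq_abs, abs_of_pos hcpos]; ring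
    have hxinner : ⟪z, x⟫ = (a:ℝ) * ⟪z, u v⟫ - (b:ℝ) * ⟪z, u w⟫ := by
      rw [hx, inner_sub_right, real_inner_smul_right, real_inner_smul_right]
    have hzx : |⟪z, x⟫| ≤ ‖z‖ / 16 := by
      have htri : |⟪z, x⟫| ≤ (a:ℝ) * |⟪z, u v⟫| + (b:ℝ) * |⟪z, u w⟫| := by
        rw [hxinner]
        calc |(a:ℝ) * ⟪z, u v⟫ - (b:ℝ) * ⟪z, u w⟫|
            ≤ |(a:ℝ) * ⟪z, u v⟫| + |(b:ℝ) * ⟪z, u w⟫| := abs_sub _ _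
          _ = (a:ℝ) * |⟪z, u v⟫| + (b:ℝ) * |⟪z, u w⟫| := by
              rw [abs_mul, abs_mul, Nat.abs_cast, Nat.abs_cast]
      have hstep : (a:ℝ) * |⟪z, u v⟫| + (b:ℝ) * |⟪z, u w⟫| ≤
          (n:ℝ) * (2 * α * ‖z‖) + (n:ℝ) * (2 * α * ‖z‖) :=
        add_le_add (mul_le_mul haR hzuv (abs_nonneg _) (by positivity))
          (mul_le_mul hbR hzuw (abs_nonneg _) (by positivity))
      have hcalc : (n:ℝ) * (2 * α * ‖z‖) + (n:ℝ) * (2 * α * ‖z‖) = ‖z‖ / 16 := by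
        rw [hαdef]
        have hne : (n:ℝ) ≠ 0 := by positivity
        field_simp
        ring
      linarith
    have hxnorm : ‖x‖ ≤ 2 * n := by
      rw [hx]
      calc ‖(a:ℝ) • u v - (b:ℝ) • u w‖ ≤ ‖(a:ℝ) • u v‖ + ‖(b:ℝ) • u w‖ := norm_sub_le _ _
        _ = (a:ℝ) * ‖u v‖ + (b:ℝ) * ‖u w‖ := by
            rw [norm_smul, norm_smul, Real.norm_eq_abs, Real.norm_eq_abs,
              abs_of_nonneg (Nat.cast_nonneg a), abs_of_nonneg (Nat.cast_nonneg b)]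
        _ = (a:ℝ) + (b:ℝ) := by rw [hu1 v hv, hu1 w hw]; ring
        _ ≤ 2 * n := by linarith
    have := L3 z x n hn hD hzx hxnorm
    rw [hdisteq, ← hnz]
    exact this
    -- far apart across progressions
  have hfar : ∀ v ∈ S₁, ∀ w ∈ S₁, v ≠ w → ∀ a b : ℕ, a ≤ n → b ≤ n →
      15 ≤ dist (F (v,a)) (F (w,b)) := by
    intro v hv w hw hvw a b ha hb
    have h1 := K2 v hv w hw hvw a b ha hb
    have h2 : 16 ≤ c * dist v w := by
      have hd1 := hsep v hv w hw hvw
      calc (16:ℝ) ≤ c := hc16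
        _ = c * 1 := (mul_one c).symm
        _ ≤ c * dist v w := mul_le_mul_of_nonneg_left hd1 hcpos.le
    have h3 := abs_le.mp h1
    linarith [h3.1]
  set T : Finset (Pt d × ℕ) := S₁ ×ˢ Finset.range m with hT
  have hamem : ∀ x : Pt d × ℕ, x ∈ T → x.1 ∈ S₁ ∧ x.2 < m := by
    intro x hx
    rw [hT, Finset.mem_product, Finset.mem_range] at hx
    exact hx
  have hTmem : ∀ v ∈ S₁, ∀ a, a < m → (v, a) ∈ T := by
    intro v hv a ha
    rw [hT, Finset.mem_product, Finset.mem_range]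
    exact ⟨hv, ha⟩
  have hFinj : Set.InjOn F ↑T := by
    rintro ⟨v,a⟩ hx ⟨w,b⟩ hy hxy
    obtain ⟨hv, ha⟩ := hamem _ (Finset.mem_coe.mp hx)
    obtain ⟨hw, hb⟩ := hamem _ (Finset.mem_coe.mp hy)
    by_cases hvw : v = w
    · subst hvw
      have hdd := K1 v hv a b
      rw [show F (v,a) = F (v,b) from hxy, dist_self] at hdd
      have hr : (a:ℝ) = b := by
        have := abs_eq_zero.mp hdd.symm
        linarith
      have hab : a = b := by exact_mod_cast hr
      rw [hab]
    · exfalso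
      have h15 := hfar v hv w hw hvw a b (by omega) (by omega)
      rw [hxy, dist_self] at h15
      linarith
  have hScard : (T.image F).card = n := by
    rw [Finset.card_image_of_injOn hFinj, hT, Finset.card_product, hS₁card,
      Finset.card_range]
    exact hnm.symm
  have hSep : Separated (T.image F) := by
    intro p hp q hq hpq
    obtain ⟨⟨v,a⟩, hxT, rfl⟩ := Finset.mem_image.mp hp
    obtain ⟨⟨w,b⟩, hyT, rfl⟩ := Finset.mem_image.mp hq
    obtain ⟨hv, ha⟩ := hamem _ hxT
    obtain ⟨hw, hb⟩ := hamem _ hyT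
    by_cases hvw : v = w
    · subst hvw
      have hab : a ≠ b := fun h => hpq (by rw [h])
      rw [K1 v hv a b]
      exact Habs a b hab
    · have := hfar v hv w hw hvw a b (by omega) (by omega)
      linarith
  set t' : ℕ → ℝ := fun i => c * t i - 1/4 with ht'
  have ht'1 : ∀ i < k, 1 ≤ t' i := by
    intro i hik
    have := ht1 i hik
    simp only [ht']
    nlinarith
  set Q : Finset ((Pt d × Pt d) × (ℕ × ℕ)) :=
    S₁.offDiag ×ˢ (Finset.range m ×ˢ Finset.range m) with hQ
  set G : (Pt d × Pt d) × (ℕ × ℕ) → Pt d × Pt d :=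
    fun x => (F (x.1.1, x.2.1), F (x.1.2, x.2.2)) with hG
  have hQmem : ∀ x : (Pt d × Pt d) × (ℕ × ℕ), x ∈ Q ↔
      (x.1.1 ∈ S₁ ∧ x.1.2 ∈ S₁ ∧ x.1.1 ≠ x.1.2) ∧ x.2.1 < m ∧ x.2.2 < m := by
    intro x
    rw [hQ, Finset.mem_product, Finset.mem_product, Finset.mem_offDiag,
      Finset.mem_range, Finset.mem_range]
  have hNP : nearPairs (T.image F) k 1 t' = Q.image G := by
    ext pq
    simp only [nearPairs, Finset.mem_filter, Finset.mem_offDiag, Finset.mem_image]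
    constructor
    · rintro ⟨⟨hp, hq, hpq⟩, i, hik, hIcc⟩
      obtain ⟨⟨v,a⟩, hxT, hpe⟩ := hp
      obtain ⟨⟨w,b⟩, hyT, hqe⟩ := hq
      obtain ⟨hv, ha⟩ := hamem _ hxT
      obtain ⟨hw, hb⟩ := hamem _ hyT
      have hvw : v ≠ w := by
        intro h
        subst h
        have hdd : dist pq.1 pq.2 = |(a:ℝ) - (b:ℝ)| := by
          rw [← hpe, ← hqe]; exact K1 v hv a b
        have h1 : t' i ≤ dist pq.1 pq.2 := hIcc.1
        have haR : (a:ℝ) ≤ n := by exact_mod_cast (by omega : a ≤ n)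
        have hbR : (b:ℝ) ≤ n := by exact_mod_cast (by omega : b ≤ n)
        have h2 : |(a:ℝ) - (b:ℝ)| ≤ (n:ℝ) := by
          rw [abs_le]
          constructor
          · have := Nat.cast_nonneg (α := ℝ) a
            linarith
          · have := Nat.cast_nonneg (α := ℝ) b
            linarith
        simp only [ht'] at h1
        have h3 := ht1 i hik
        rw [hdd] at h1
        nlinarith
      refine ⟨((v,w),(a,b)), (hQmem _).mpr ⟨⟨hv, hw, hvw⟩, ha, hb⟩, ?_⟩
      simp only [hG]
      exact Prod.ext hpe hqe
    · rintro ⟨⟨⟨v,w⟩,⟨a,b⟩⟩, hxQ, rfl⟩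
      obtain ⟨⟨hv, hw, hvw⟩, ha, hb⟩ := (hQmem _).mp hxQ
      have ha' : a < m := ha
      have hb' : b < m := hb
      simp only [hG]
      have hK2 := K2 v hv w hw hvw a b (by omega) (by omega)
      have h15 := hfar v hv w hw hvw a b (by omega) (by omega)
      refine ⟨⟨?_, ?_, ?_⟩, ?_⟩
      · exact ⟨(v,a), hTmem v hv a ha', rfl⟩
      · exact ⟨(w,b), hTmem w hw b hb', rfl⟩
      · intro h
        rw [h, dist_self] at h15
        linarith
      · obtain ⟨i, hik, hIcc⟩ := htd v hv w hw hvw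
        rw [Set.mem_Icc] at hIcc
        refine ⟨i, hik, ?_⟩
        rw [Set.mem_Icc]
        simp only [ht']
        have habs := abs_le.mp hK2
        have hl : c * t i ≤ c * dist v w := mul_le_mul_of_nonneg_left hIcc.1 hcpos.le
        have hr : c * dist v w ≤ c * (t i + ε₀) := mul_le_mul_of_nonneg_left hIcc.2 hcpos.le
        have h2 : c * (t i + ε₀) = c * t i + 1/4 := by rw [mul_add, hcε₀]
        constructor
        · linarith [habs.1]
        · linarith [habs.2]
  have hGinj : Set.InjOn G ↑Q := by
    rintro ⟨⟨v,w⟩,⟨a,b⟩⟩ hx ⟨⟨v',w'⟩,⟨a',b'⟩⟩ hy hxy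
    obtain ⟨⟨hv, hw, hvw⟩, ha0, hb0⟩ := (hQmem _).mp (Finset.mem_coe.mp hx)
    obtain ⟨⟨hv', hw', hvw'⟩, ha0', hb0'⟩ := (hQmem _).mp (Finset.mem_coe.mp hy)
    have ha : a < m := ha0
    have hb : b < m := hb0
    have ha' : a' < m := ha0'
    have hb' : b' < m := hb0'
    simp only [hG, Prod.mk.injEq] at hxy
    have e1 := hFinj (Finset.mem_coe.mpr (hTmem v hv a ha))
      (Finset.mem_coe.mpr (hTmem v' hv' a' ha')) hxy.1
    have e2 := hFinj (Finset.mem_coe.mpr (hTmem w hw b hb))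
      (Finset.mem_coe.mpr (hTmem w' hw' b' hb')) hxy.2
    simp only [Prod.mk.injEq] at e1 e2
    simp [Prod.mk.injEq, e1.1, e1.2, e2.1, e2.2]
  have hNPcard : (nearPairs (T.image F) k 1 t').card = (N*N - N) * (m*m) := by
    rw [hNP, Finset.card_image_of_injOn hGinj, hQ, Finset.card_product,
      Finset.card_product, Finset.offDiag_card, hS₁card, Finset.card_range]
  have h2M : (N*N - N) * (m*m) = 2 * (N.choose 2 * (m*m)) := by
    rw [Hsq]; ring
  have hmod : n % N = 0 := by
    rw [hnm]; exact Nat.mul_mod_right N m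
  have hturan : turanNum n N ≤ N.choose 2 * (m*m) := by
    unfold turanNum
    rw [hmod, ← hm]
    simp only [Nat.zero_mul, Nat.zero_add, Nat.sub_zero]
    rw [tsub_le_iff_right]
    have h1n : 1 ≤ n := hn
    have h1N : 1 ≤ N := hNpos
    have h1m : 1 ≤ m := hmpos
    have h2 : 2 * n.choose 2 ≤ 2 * (N.choose 2 * (m*m) + N * m.choose 2) := by
      have hNat : n * (n - 1) ≤ N*(N-1)*(m*m) + N*(m*(m-1)) := by
        zify [h1n, h1N, h1m]
        have hcast : (n:ℤ) = (N:ℤ) * m := by exact_mod_cast hnm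
        rw [hcast]
        nlinarith [hcast]
      calc 2 * n.choose 2 = n * (n-1) := Hchoose n
        _ ≤ N*(N-1)*(m*m) + N*(m*(m-1)) := hNat
        _ = 2 * (N.choose 2 * (m*m) + N * m.choose 2) := by
            have e1 : 2 * (N.choose 2 * (m*m)) = N*(N-1)*(m*m) := by
              rw [← Nat.mul_assoc, Hchoose]
            have e2 : 2 * (N * m.choose 2) = N*(m*(m-1)) := by
              rw [show 2*(N*m.choose 2) = N*(2*m.choose 2) by ring, Hchoose]
            rw [Nat.mul_add 2, e1, e2]
    exact Nat.le_of_mul_le_mul_left h2 (by norm_num)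
  set B : Set ℕ := {M | ∃ (S : Finset (Pt d)) (t : ℕ → ℝ), S.card = n ∧ Separated S ∧
    (∀ i < k, 1 ≤ t i) ∧ (nearPairs S k 1 t).card = 2 * M} with hB
  have hMk : Mkdn k d n = sSup B := rfl
  have hBdd : BddAbove B := by
    refine ⟨n*n, fun M' hM' => ?_⟩
    obtain ⟨S', t'', hc', _, _, he⟩ := hM'
    have h1 : (nearPairs S' k 1 t'').card ≤ S'.offDiag.card := by
      unfold nearPairs
      exact Finset.card_filter_le _ _
    rw [he, Finset.offDiag_card, hc'] at h1
    have h2 : 2*M' ≤ n*n := le_trans h1 (Nat.sub_le _ _)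
    have h3 : M' ≤ 2*M' := by omega
    exact le_trans h3 h2
  have hMmem : N.choose 2 * (m*m) ∈ B :=
    ⟨T.image F, t', hScard, hSep, ht'1, by rw [hNPcard]; exact h2M⟩
  have hfin : N.choose 2 * (m*m) ≤ Mkdn k d n := by
    rw [hMk]; exact le_csSup hBdd hMmem
  exact le_trans hturan hfin

end
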